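/- There exist positive constants c, C and n₀ such that for all n ≥ n₀, c·3^{n/3} ≤ m(n) ≤ C·3^{n/3}; that is, m(n) = Θ(3^{n/3}). -/

import Mathlib

namespace ExtremalInducedCycles
open SimpleGraph

/-- The vertex set `s` induces a cycle (of length at least 3) in `G`:
the induced subgraph is connected and 2-regular. -/
def IsInducedCycle {V : Type*} (G : SimpleGraph V) (s : Set V) : Prop :=
  s.Finite ∧ 3 ≤ s.ncard ∧ (G.induce s).Connected ∧
    ∀ v ∈ s, {w | w ∈ s ∧ G.Adj v w}.ncard = 2

/-- `f(G)`: the number of induced cycles in `G`. -/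
noncomputable def numInducedCycles {V : Type*} (G : SimpleGraph V) : ℕ :=
  {s : Set V | IsInducedCycle G s}.ncard

/-- `m(n)`: the maximum number of induced cycles in an `n`-vertex graph. -/
noncomputable def maxInducedCycles (n : ℕ) : ℕ :=
  sSup {k : ℕ | ∃ G : SimpleGraph (Fin n), numInducedCycles G = k}


variable {V : Type*} {G : SimpleGraph V} {s t : Set V} {x y z : V}

/-- reachability inside a vertex set -/
def ReachIn (G : SimpleGraph V) (s : Set V) (x y : V) : Prop :=
  ∃ p : G.Walk x y, ∀ z ∈ p.support, z ∈ s

lemma ReachIn.refl (hx : x ∈ s) : ReachIn G s x x :=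
  ⟨SimpleGraph.Walk.nil, by simp [hx]⟩

lemma ReachIn.symm (h : ReachIn G s x y) : ReachIn G s y x := by
  obtain ⟨p, hp⟩ := h
  exact ⟨p.reverse, by simpa using hp⟩

lemma ReachIn.trans (h : ReachIn G s x y) (h' : ReachIn G s y z) : ReachIn G s x z := by
  obtain ⟨p, hp⟩ := h; obtain ⟨q, hq⟩ := h'
  refine ⟨p.append q, ?_⟩
  intro w hw
  rcases (SimpleGraph.Walk.mem_support_append_iff _ _).1 hw with h | h
  · exact hp _ h
  · exact hq _ h

lemma ReachIn.step (h : ReachIn G s x y) (ha : G.Adj y z) (hz : z ∈ s) : ReachIn G s x z := by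
  obtain ⟨p, hp⟩ := h
  refine ⟨p.concat ha, ?_⟩
  intro w hw
  rw [SimpleGraph.Walk.support_concat, List.mem_append] at hw
  rcases hw with h | h
  · exact hp _ h
  · simp at h; subst h; exact hz

lemma ReachIn.mono (hst : s ⊆ t) (h : ReachIn G s x y) : ReachIn G t x y := by
  obtain ⟨p, hp⟩ := h; exact ⟨p, fun z hz => hst (hp z hz)⟩

lemma ReachIn.left_mem (h : ReachIn G s x y) : x ∈ s := by
  obtain ⟨p, hp⟩ := h; exact hp _ p.start_mem_support

lemma ReachIn.right_mem (h : ReachIn G s x y) : y ∈ s := by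
  obtain ⟨p, hp⟩ := h; exact hp _ p.end_mem_support

/-- walks in induced subgraph give walks in `G` within `s` -/
lemma reachIn_of_induce_walk {s : Set V} : ∀ {x y : ↥s} (_ : (G.induce s).Walk x y),
    ReachIn G s x.1 y.1 := by
  intro x y p
  induction p with
  | nil => exact ReachIn.refl (Subtype.mem _)
  | @cons u v w h q ih =>
      have hadj : G.Adj u.1 v.1 := h
      exact ReachIn.trans ⟨SimpleGraph.Walk.cons hadj SimpleGraph.Walk.nil,
        by intro z hz; simp at hz; rcases hz with rfl | rfl <;> exact Subtype.mem _⟩ ih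

/-- walks in `G` within `s` lift to the induced subgraph -/
lemma induce_reachable_of_walk {s : Set V} : ∀ {x y : V} (p : G.Walk x y),
    (∀ z ∈ p.support, z ∈ s) → ∀ (hx : x ∈ s) (hy : y ∈ s),
    (G.induce s).Reachable ⟨x, hx⟩ ⟨y, hy⟩ := by
  intro x y p
  induction p with
  | nil => intro _ hx hy; exact SimpleGraph.Reachable.refl _
  | @cons u v w h q ih =>
      intro hp hu hw
      have hv : v ∈ s := hp v (by simp)
      have hadj : (G.induce s).Adj ⟨u, hu⟩ ⟨v, hv⟩ := h
      exact (hadj.reachable).trans (ih (fun z hz => hp _ (by simp [hz])) hv hw)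

lemma induce_connected_iff {s : Set V} :
    (G.induce s).Connected ↔ s.Nonempty ∧ ∀ x ∈ s, ∀ y ∈ s, ReachIn G s x y := by
  constructor
  · intro hc
    obtain ⟨⟨z, hz⟩⟩ := hc.nonempty
    refine ⟨⟨z, hz⟩, fun x hx y hy => ?_⟩
    obtain ⟨p⟩ := hc.preconnected ⟨x, hx⟩ ⟨y, hy⟩
    exact reachIn_of_induce_walk p
  · rintro ⟨⟨z, hz⟩, h⟩
    haveI : Nonempty ↥s := ⟨⟨z, hz⟩⟩
    refine ⟨fun a b => ?_⟩
    obtain ⟨x, hx⟩ := a; obtain ⟨y, hy⟩ := b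
    obtain ⟨p, hp⟩ := h x hx y hy
    exact induce_reachable_of_walk p hp hx hy

/-- an interior vertex of a path has two distinct neighbors on the path -/
lemma path_interior_two_nbrs : ∀ {x y : V} (p : G.Walk x y), p.IsPath → ∀ {a : V},
    a ∈ p.support → a ≠ x → a ≠ y →
    ∃ w₁ w₂, w₁ ≠ w₂ ∧ w₁ ∈ p.support ∧ w₂ ∈ p.support ∧ G.Adj a w₁ ∧ G.Adj a w₂ := by
  intro x y p
  induction p with
  | nil => intro _ a ha hax _; simp at ha; exact absurd ha hax
  | @cons u v w h q ih =>
      intro hp a ha hax hay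
      rw [SimpleGraph.Walk.support_cons, List.mem_cons] at ha
      rcases ha with rfl | ha
      · exact absurd rfl hax
      · by_cases hav : a = v
        · subst hav
          cases q with
          | nil => exact absurd rfl hay
          | @cons v v2 w h2 q2 =>
              refine ⟨u, v2, ?_, by simp, by simp, h.symm, h2⟩
              intro huv2
              have hu : u ∉ (SimpleGraph.Walk.cons h2 q2).support :=
                ((SimpleGraph.Walk.cons_isPath_iff _ _).1 hp).2
              exact hu (by rw [huv2]; simp)
        · obtain ⟨w₁, w₂, hne, hw₁, hw₂, h1, h2⟩ :=
            ih ((SimpleGraph.Walk.cons_isPath_iff _ _).1 hp).1 ha hav hay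
          exact ⟨w₁, w₂, hne, by simp [hw₁], by simp [hw₂], h1, h2⟩

/-- extract the first step of a nontrivial path staying in `t` -/
lemma first_step {t : Set V} {a x : V} (q : G.Walk a x) (hq : q.IsPath) (hax : a ≠ x)
    (hsup : ∀ z ∈ q.support, z ∈ t) :
    ∃ (w : V) (q2 : G.Walk w x), G.Adj a w ∧ w ∈ t ∧ (∀ z ∈ q2.support, z ∈ t) ∧
      a ∉ q2.support ∧ q2.IsPath ∧ (∀ z ∈ q2.support, z ∈ q.support) := by
  cases q with
  | nil => exact absurd rfl hax
  | @cons u v w h q2 =>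
      refine ⟨v, q2, h, hsup v (by simp), fun z hz => hsup z (by simp [hz]), ?_, ?_, ?_⟩
      · exact ((SimpleGraph.Walk.cons_isPath_iff _ _).1 hq).2
      · exact ((SimpleGraph.Walk.cons_isPath_iff _ _).1 hq).1
      · intro z hz; simp [hz]

/-- a path between vertices distinct from `a` avoids `a` whenever `a` has at most one
neighbor in `t` -/
lemma reach_in_diff_of_few_nbrs {t : Set V} {a x y : V} (h : ReachIn G t x y)
    (hax : x ≠ a) (hay : y ≠ a)
    (hfew : ∀ w₁ w₂, w₁ ∈ t → w₂ ∈ t → G.Adj a w₁ → G.Adj a w₂ → w₁ = w₂) :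
    ReachIn G (t \ {a}) x y := by
  classical
  obtain ⟨p, hp⟩ := h
  refine ⟨p.toPath.1, fun z hz => ?_⟩
  have hzt : z ∈ t := hp z (SimpleGraph.Walk.support_toPath_subset p hz)
  refine ⟨hzt, ?_⟩
  simp only [Set.mem_singleton_iff]
  rintro rfl
  obtain ⟨w₁, w₂, hne, hw₁, hw₂, h1, h2⟩ :=
    path_interior_two_nbrs p.toPath.1 p.toPath.2 hz (Ne.symm hax) (Ne.symm hay)
  exact hne (hfew w₁ w₂ (hp _ (SimpleGraph.Walk.support_toPath_subset p hw₁))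
    (hp _ (SimpleGraph.Walk.support_toPath_subset p hw₂)) h1 h2)

lemma parity_handshake {U : Set V} (hU : U.Finite) {u : V} (hu : u ∈ U)
    (hdeg1 : {w | w ∈ U ∧ G.Adj u w}.ncard = 1)
    (hdeg2 : ∀ x ∈ U, x ≠ u → {w | w ∈ U ∧ G.Adj x w}.ncard = 2) : False := by
  classical
  letI : Fintype ↥U := hU.fintype
  letI : DecidableRel (G.induce U).Adj := Classical.decRel _
  have hsum := SimpleGraph.sum_degrees_eq_twice_card_edges (G.induce U)
  have hdeg : ∀ x : ↥U, (G.induce U).degree x = if x = (⟨u, hu⟩ : ↥U) then 1 else 2 := by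
    intro x
    have h1 : {w | w ∈ U ∧ G.Adj x.1 w} = Subtype.val '' ((G.induce U).neighborSet x) := by
      ext w
      simp only [Set.mem_image, SimpleGraph.mem_neighborSet, Set.mem_setOf_eq]
      constructor
      · rintro ⟨hw, hadj⟩; exact ⟨⟨w, hw⟩, hadj, rfl⟩
      · rintro ⟨⟨w', hw'⟩, hadj, rfl⟩; exact ⟨hw', hadj⟩
    have h2 : {w | w ∈ U ∧ G.Adj x.1 w}.ncard = (G.induce U).degree x := by
      rw [h1, Set.ncard_image_of_injective _ Subtype.val_injective,
        ← Nat.card_coe_set_eq, Nat.card_eq_fintype_card]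
      exact SimpleGraph.card_neighborSet_eq_degree _ _
    rw [← h2]
    by_cases hxu : x = (⟨u, hu⟩ : ↥U)
    · rw [if_pos hxu, hxu]; exact hdeg1
    · rw [if_neg hxu]
      exact hdeg2 x.1 x.2 (fun h => hxu (Subtype.ext h))
  rw [Finset.sum_congr rfl (fun x _ => hdeg x)] at hsum
  rw [← Finset.add_sum_erase _ _ (Finset.mem_univ (⟨u, hu⟩ : ↥U))] at hsum
  rw [if_pos rfl] at hsum
  rw [Finset.sum_congr rfl (fun x hx => if_neg (Finset.ne_of_mem_erase hx))] at hsum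
  rw [Finset.sum_const, smul_eq_mul] at hsum
  have hcard : ((Finset.univ : Finset ↥U).erase ⟨u, hu⟩).card + 1 = Fintype.card ↥U := by
    rw [Finset.card_erase_of_mem (Finset.mem_univ _)]
    have : 1 ≤ Fintype.card ↥U := Fintype.card_pos_iff.2 ⟨⟨u, hu⟩⟩
    simp [Finset.card_univ]
    omega
  omega

/-- `t` induces a path from `a` to `b`. -/
def Pathish (G : SimpleGraph V) (t : Set V) (a b : V) : Prop :=
  t.Finite ∧ a ∈ t ∧ b ∈ t ∧ a ≠ b ∧ (G.induce t).Connected ∧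
    {w | w ∈ t ∧ G.Adj a w}.ncard = 1 ∧ {w | w ∈ t ∧ G.Adj b w}.ncard = 1 ∧
    ∀ x ∈ t, x ≠ a → x ≠ b → {w | w ∈ t ∧ G.Adj x w}.ncard = 2

lemma pathish_peel {a b : V} (ht : Pathish G t a b) (hne : t ≠ {a, b}) :
    ∃ u, u ∈ t ∧ u ≠ a ∧ u ≠ b ∧ G.Adj a u ∧ (∀ x ∈ t, G.Adj a x → x = u) ∧
      Pathish G (t \ {a}) u b := by
  classical
  obtain ⟨hfin, hat, hbt, hab, hconn, hda, hdb, hdeg⟩ := ht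
  obtain ⟨u, hu⟩ := Set.ncard_eq_one.1 hda
  have hut : u ∈ t ∧ G.Adj a u := by
    have : u ∈ {w | w ∈ t ∧ G.Adj a w} := hu ▸ rfl
    exact this
  have hua : u ≠ a := fun h => G.irrefl (h ▸ hut.2)
  have huniq : ∀ x ∈ t, G.Adj a x → x = u := by
    intro x hx hadx
    have : x ∈ {w | w ∈ t ∧ G.Adj a w} := ⟨hx, hadx⟩
    rw [hu] at this; exact this
  have hfew : ∀ w₁ w₂, w₁ ∈ t → w₂ ∈ t → G.Adj a w₁ → G.Adj a w₂ → w₁ = w₂ :=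
    fun w₁ w₂ h1 h2 h3 h4 => (huniq w₁ h1 h3).trans (huniq w₂ h2 h4).symm
  have hconn' := induce_connected_iff.1 hconn
  -- b's unique neighbor
  obtain ⟨c, hc⟩ := Set.ncard_eq_one.1 hdb
  have hbuniq : ∀ x ∈ t, G.Adj b x → x = c := by
    intro x hx hadx
    have : x ∈ {w | w ∈ t ∧ G.Adj b w} := ⟨hx, hadx⟩
    rw [hc] at this; exact this
  -- u ≠ b
  have hub : u ≠ b := by
    intro hub'
    subst hub'
    -- b has been replaced by u
    have hca : c = a := (hbuniq a hat hut.2.symm).symm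
    have hss : ({a, u} : Set V) ⊂ t := by
      refine ⟨by rintro w (rfl | rfl); exacts [hat, hut.1], fun h => hne ?_⟩
      exact le_antisymm h (by rintro w (rfl | rfl); exacts [hat, hut.1])
    obtain ⟨x, hxt, hxau⟩ := Set.exists_of_ssubset hss
    have hxa : x ≠ a := fun h => hxau (by simp [h])
    have hxu : x ≠ u := fun h => hxau (by simp [h])
    obtain ⟨p, hp⟩ := hconn'.2 a hat x hxt
    have hq := p.toPath.2
    obtain ⟨w, q2, hadj, hwt, hsup2, hanot, hq2path, _⟩ :=
      first_step p.toPath.1 hq (Ne.symm hxa)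
        (fun z hz => hp z (SimpleGraph.Walk.support_toPath_subset p hz))
    have hwu : w = u := huniq w hwt hadj
    subst hwu
    obtain ⟨w', q3, hadj', hw't, hsup3, hunot, hq3path, hsub3⟩ :=
      first_step q2 hq2path (Ne.symm hxu) hsup2
    have hw'a : w' = a := (hbuniq w' hw't hadj').trans hca
    subst hw'a
    exact hanot (hsub3 _ q3.start_mem_support)
  refine ⟨u, hut.1, hua, hub, hut.2, huniq, ?_⟩
  have haadjb : ¬ G.Adj a b := fun h => hub (huniq b hbt h).symm
  refine ⟨hfin.diff, ⟨hut.1, by simp [hua]⟩, ⟨hbt, by simp [Ne.symm hab]⟩, hub, ?_, ?_, ?_, ?_⟩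
  · -- connectivity
    rw [induce_connected_iff]
    refine ⟨⟨u, hut.1, by simp [hua]⟩, ?_⟩
    rintro x ⟨hxt, hxa⟩ y ⟨hyt, hya⟩
    simp only [Set.mem_singleton_iff] at hxa hya
    exact reach_in_diff_of_few_nbrs (hconn'.2 x hxt y hyt) hxa hya hfew
  · -- degree of u in t \ {a}
    have h1 : {w | w ∈ t \ {a} ∧ G.Adj u w} = {w | w ∈ t ∧ G.Adj u w} \ {a} := by
      ext w; simp [Set.mem_diff, and_comm, and_assoc, and_left_comm]
    have hmem : a ∈ {w | w ∈ t ∧ G.Adj u w} := ⟨hat, hut.2.symm⟩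
    rw [h1, Set.ncard_diff_singleton_of_mem hmem]
    rw [hdeg u hut.1 hua hub]
  · -- degree of b in t \ {a}
    have h1 : {w | w ∈ t \ {a} ∧ G.Adj b w} = {w | w ∈ t ∧ G.Adj b w} := by
      ext w
      simp only [Set.mem_diff, Set.mem_setOf_eq, Set.mem_singleton_iff]
      constructor
      · rintro ⟨⟨hw, _⟩, hadj⟩; exact ⟨hw, hadj⟩
      · rintro ⟨hw, hadj⟩
        exact ⟨⟨hw, fun h => haadjb (h ▸ hadj).symm⟩, hadj⟩
    rw [h1, hdb]
  · -- interior degrees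
    rintro x ⟨hxt, hxa'⟩ hxu hxb
    have hxa : x ≠ a := by simpa using hxa'
    have hxadja : ¬ G.Adj x a := fun h => hxu (huniq x hxt h.symm)
    have h1 : {w | w ∈ t \ {a} ∧ G.Adj x w} = {w | w ∈ t ∧ G.Adj x w} := by
      ext w
      simp only [Set.mem_diff, Set.mem_setOf_eq, Set.mem_singleton_iff]
      constructor
      · rintro ⟨⟨hw, _⟩, hadj⟩; exact ⟨hw, hadj⟩
      · rintro ⟨hw, hadj⟩; exact ⟨⟨hw, fun h => hxadja (h ▸ hadj)⟩, hadj⟩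
    rw [h1, hdeg x hxt hxa hxb]

lemma cycle_peel {v : V} (hfin : s.Finite) (hconn : (G.induce s).Connected)
    (hdeg : ∀ x ∈ s, {w | w ∈ s ∧ G.Adj x w}.ncard = 2) (hv : v ∈ s) :
    ∃ u u', u ≠ u' ∧ {w | w ∈ s ∧ G.Adj v w} = {u, u'} ∧ Pathish G (s \ {v}) u u' := by
  classical
  obtain ⟨u, u', huu', hset⟩ := Set.ncard_eq_two.1 (hdeg v hv)
  have humem : u ∈ s ∧ G.Adj v u := by
    have : u ∈ {w | w ∈ s ∧ G.Adj v w} := by rw [hset]; simp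
    exact this
  have hu'mem : u' ∈ s ∧ G.Adj v u' := by
    have : u' ∈ {w | w ∈ s ∧ G.Adj v w} := by rw [hset]; simp
    exact this
  have huv : u ≠ v := fun h => G.irrefl (h ▸ humem.2.symm)
  have hu'v : u' ≠ v := fun h => G.irrefl (h ▸ hu'mem.2.symm)
  have hvnbr : ∀ x ∈ s, G.Adj v x → x = u ∨ x = u' := by
    intro x hx hadj
    have : x ∈ {w | w ∈ s ∧ G.Adj v w} := ⟨hx, hadj⟩
    rw [hset] at this; exact this
  have hconn' := induce_connected_iff.1 hconn
  -- every vertex of s \ {v} reaches u or u' within s \ {v}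
  have hreach : ∀ x ∈ s, x ≠ v →
      ReachIn G (s \ {v}) x u ∨ ReachIn G (s \ {v}) x u' := by
    intro x hx hxv
    obtain ⟨p, hp⟩ := hconn'.2 v hv x hx
    have hq := p.toPath.2
    obtain ⟨w, q2, hadj, hwt, hsup2, hvnot, hq2path, _⟩ :=
      first_step p.toPath.1 hq (Ne.symm hxv)
        (fun z hz => hp z (SimpleGraph.Walk.support_toPath_subset p hz))
    have hsup2' : ∀ z ∈ q2.support, z ∈ s \ {v} := by
      intro z hz
      exact ⟨hsup2 z hz, by simp; rintro rfl; exact hvnot hz⟩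
    have hr : ReachIn G (s \ {v}) x w := ReachIn.symm ⟨q2, hsup2'⟩
    rcases hvnbr w hwt hadj with rfl | rfl
    · exact Or.inl hr
    · exact Or.inr hr
  -- u reaches u' within s \ {v}
  have hkey : ReachIn G (s \ {v}) u u' := by
    by_contra hcon
    set U : Set V := {x | x ∈ s ∧ x ≠ v ∧ ReachIn G (s \ {v}) u x} with hU
    have hUfin : U.Finite := hfin.subset (fun x hx => hx.1)
    have huU : u ∈ U := ⟨humem.1, huv, ReachIn.refl ⟨humem.1, by simp [huv]⟩⟩
    have hu'U : u' ∉ U := fun h => hcon h.2.2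
    have hclosed : ∀ x ∈ U, ∀ y, y ∈ s → y ≠ v → G.Adj x y → y ∈ U := by
      rintro x ⟨hxs, hxv, hxr⟩ y hys hyv hadj
      exact ⟨hys, hyv, hxr.step hadj ⟨hys, by simp [hyv]⟩⟩
    -- degree of u in U is 1
    have hdegu : {w | w ∈ U ∧ G.Adj u w}.ncard = 1 := by
      have h2 := hdeg u humem.1
      obtain ⟨c₁, c₂, hc12, hcset⟩ := Set.ncard_eq_two.1 h2
      -- v is one of c₁, c₂
      have hvin : v ∈ ({c₁, c₂} : Set V) := by
        rw [← hcset]; exact ⟨hv, humem.2.symm⟩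
      -- the other one, say c, is the unique U-neighbor of u
      have main : ∀ c, ({c₁, c₂} : Set V) = {v, c} → c ≠ v → {w | w ∈ U ∧ G.Adj u w} = {c} := by
        intro c hpair hcv
        have hcnbr : c ∈ {w | w ∈ s ∧ G.Adj u w} := by rw [hcset, hpair]; simp
        have hcU : c ∈ U := hclosed u huU c hcnbr.1 hcv hcnbr.2
        ext w
        simp only [Set.mem_setOf_eq, Set.mem_singleton_iff]
        constructor
        · rintro ⟨hwU, hadj⟩
          have : w ∈ ({v, c} : Set V) := by
            rw [← hpair, ← hcset]; exact ⟨hwU.1, hadj⟩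
          rcases this with rfl | rfl
          · exact absurd hwU.2.1 (not_not.2 rfl)
          · rfl
        · rintro rfl; exact ⟨hcU, hcnbr.2⟩
      rcases hvin with h1 | h1
      · subst h1
        rw [main c₂ rfl (by rintro rfl; exact hc12 rfl)]
        exact Set.ncard_singleton _
      · have : ({c₁, c₂} : Set V) = {v, c₁} := by rw [← h1]; exact Set.pair_comm _ _
        subst h1
        rw [main c₁ this (by rintro rfl; exact hc12 rfl)]
        exact Set.ncard_singleton _
    -- degree of x ≠ u in U is 2
    have hdegx : ∀ x ∈ U, x ≠ u → {w | w ∈ U ∧ G.Adj x w}.ncard = 2 := by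
      rintro x ⟨hxs, hxv, hxr⟩ hxu
      have : {w | w ∈ U ∧ G.Adj x w} = {w | w ∈ s ∧ G.Adj x w} := by
        ext w
        simp only [Set.mem_setOf_eq]
        constructor
        · rintro ⟨hwU, hadj⟩; exact ⟨hwU.1, hadj⟩
        · rintro ⟨hws, hadj⟩
          have hwv : w ≠ v := by
            rintro rfl
            rcases hvnbr x hxs hadj.symm with rfl | rfl
            · exact hxu rfl
            · exact hu'U ⟨hxs, hxv, hxr⟩
          exact ⟨hclosed x ⟨hxs, hxv, hxr⟩ w hws hwv hadj, hadj⟩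
      rw [this, hdeg x hxs]
    exact parity_handshake hUfin huU hdegu hdegx
  -- now assemble Pathish
  have hreach' : ∀ x ∈ s, x ≠ v → ReachIn G (s \ {v}) x u := by
    intro x hx hxv
    rcases hreach x hx hxv with h | h
    · exact h
    · exact h.trans hkey.symm
  refine ⟨u, u', huu', hset, hfin.diff, ⟨humem.1, by simp [huv]⟩,
    ⟨hu'mem.1, by simp [hu'v]⟩, huu', ?_, ?_, ?_, ?_⟩
  · rw [induce_connected_iff]
    refine ⟨⟨u, humem.1, by simp [huv]⟩, ?_⟩
    rintro x ⟨hxs, hxv⟩ y ⟨hys, hyv⟩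
    simp only [Set.mem_singleton_iff] at hxv hyv
    exact (hreach' x hxs hxv).trans (hreach' y hys hyv).symm
  · -- degree of u
    have h1 : {w | w ∈ s \ {v} ∧ G.Adj u w} = {w | w ∈ s ∧ G.Adj u w} \ {v} := by
      ext w
      simp only [Set.mem_diff, Set.mem_setOf_eq, Set.mem_singleton_iff]
      tauto
    have hmem : v ∈ {w | w ∈ s ∧ G.Adj u w} := ⟨hv, humem.2.symm⟩
    rw [h1, Set.ncard_diff_singleton_of_mem hmem,
      hdeg u humem.1]
  · -- degree of u'
    have h1 : {w | w ∈ s \ {v} ∧ G.Adj u' w} = {w | w ∈ s ∧ G.Adj u' w} \ {v} := by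
      ext w
      simp only [Set.mem_diff, Set.mem_setOf_eq, Set.mem_singleton_iff]
      tauto
    have hmem : v ∈ {w | w ∈ s ∧ G.Adj u' w} := ⟨hv, hu'mem.2.symm⟩
    rw [h1, Set.ncard_diff_singleton_of_mem hmem,
      hdeg u' hu'mem.1]
  · -- interior degrees
    rintro x ⟨hxs, hxv'⟩ hxu hxu'
    have hxv : x ≠ v := by simpa using hxv'
    have h1 : {w | w ∈ s \ {v} ∧ G.Adj x w} = {w | w ∈ s ∧ G.Adj x w} := by
      ext w
      simp only [Set.mem_diff, Set.mem_setOf_eq, Set.mem_singleton_iff]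
      constructor
      · rintro ⟨⟨hw, _⟩, hadj⟩; exact ⟨hw, hadj⟩
      · rintro ⟨hws, hadj⟩
        refine ⟨⟨hws, ?_⟩, hadj⟩
        rintro rfl
        rcases hvnbr x hxs hadj.symm with rfl | rfl
        · exact hxu rfl
        · exact hxu' rfl
    rw [h1, hdeg x hxs]

/-! ### arithmetic lemmas -/

lemma nat_cube_le (d : ℕ) : d ^ 3 ≤ 3 ^ d := by
  induction d with
  | zero => norm_num
  | succ n ih =>
      rcases Nat.lt_or_ge n 3 with h | h
      · interval_cases n <;> norm_num
      · have h1 : 27 * (n + 1) ^ 3 ≤ 64 * n ^ 3 := by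
          have := Nat.pow_le_pow_left (show 3*(n+1) ≤ 4*n by omega) 3
          rw [mul_pow, mul_pow] at this
          norm_num at this
          exact this
        have h2 : 64 * n ^ 3 ≤ 64 * 3 ^ n := by omega
        have h3 : 27 * (n+1)^3 ≤ 81 * 3 ^ n := by omega
        have : 3 ^ (n+1) = 3 * 3^n := by ring
        omega

lemma nat_six_le (d : ℕ) : d ^ 6 ≤ 125 * 3 ^ d := by
  induction d with
  | zero => norm_num
  | succ n ih =>
      rcases Nat.lt_or_ge n 5 with h | h
      · interval_cases n <;> norm_num
      · have h1 : 15625 * (n + 1) ^ 6 ≤ 46656 * n ^ 6 := by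
          have := Nat.pow_le_pow_left (show 5*(n+1) ≤ 6*n by omega) 6
          rw [mul_pow, mul_pow] at this
          norm_num at this
          exact this
        have hpow : 3 ^ (n+1) = 3 * 3^n := by ring
        omega

lemma cube_le_cube {a b : ℝ} (hb : 0 ≤ b) (h : a ^ 3 ≤ b ^ 3) : a ≤ b := by
  by_contra hab
  push_neg at hab
  have := pow_lt_pow_left₀ hab hb (by norm_num : (3:ℕ) ≠ 0)
  linarith

lemma rpow_third_cube (d : ℕ) : ((3:ℝ) ^ ((d:ℝ)/3)) ^ 3 = 3 ^ d := by
  have h : ((3:ℝ) ^ ((d:ℝ)/3)) ^ (3:ℕ) = (3:ℝ) ^ (((d:ℝ)/3) * 3) := by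
    rw [← Real.rpow_natCast ((3:ℝ) ^ ((d:ℝ)/3)) 3, ← Real.rpow_mul (by norm_num : (0:ℝ) ≤ 3)]
    norm_num
  rw [h, div_mul_cancel₀ _ (by norm_num : (3:ℝ) ≠ 0), Real.rpow_natCast]

lemma rpow_third_nonneg (x : ℝ) : (0:ℝ) ≤ (3:ℝ) ^ (x/3) := (Real.rpow_pos_of_pos (by norm_num) _).le

lemma nat_le_rpow_third (d : ℕ) : (d : ℝ) ≤ (3:ℝ) ^ ((d:ℝ)/3) := by
  apply cube_le_cube (rpow_third_nonneg _)
  rw [rpow_third_cube]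
  exact_mod_cast nat_cube_le d

lemma nat_sq_le_rpow_third (d : ℕ) : (d : ℝ)^2 ≤ 5 * (3:ℝ) ^ ((d:ℝ)/3) := by
  apply cube_le_cube (by positivity)
  have h : (5 * (3:ℝ) ^ ((d:ℝ)/3)) ^ 3 = 125 * 3 ^ d := by
    rw [mul_pow, rpow_third_cube]; norm_num
  rw [h]
  have := nat_six_le d
  have : ((d:ℝ))^6 ≤ 125 * 3^d := by exact_mod_cast this
  calc ((d:ℝ)^2)^3 = (d:ℝ)^6 := by ring
  _ ≤ _ := this

lemma third_root_ge : (5/4 : ℝ) ≤ (3:ℝ) ^ ((1:ℝ)/3) := by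
  apply cube_le_cube (rpow_third_nonneg 1)
  have : ((3:ℝ) ^ ((1:ℝ)/3))^3 = 3 := by
    have := rpow_third_cube 1
    simpa using this
  rw [this]; norm_num

lemma rpow_third_mono {x y : ℝ} (h : x ≤ y) : (3:ℝ) ^ (x/3) ≤ (3:ℝ) ^ (y/3) :=
  Real.rpow_le_rpow_of_exponent_le (by norm_num) (by linarith)

lemma one_le_rpow_third {x : ℝ} (h : 0 ≤ x) : (1:ℝ) ≤ (3:ℝ) ^ (x/3) := by
  have := rpow_third_mono (x := 0) (y := x) h
  simpa using this

lemma rpow_third_add (x y : ℝ) : (3:ℝ) ^ ((x+y)/3) = (3:ℝ) ^ (x/3) * (3:ℝ) ^ (y/3) := by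
  rw [← Real.rpow_add (by norm_num : (0:ℝ) < 3)]
  ring_nf

/-- the key recursion inequality for induced paths -/
lemma arith_main {m d : ℕ} (hd1 : 1 ≤ d) (hdm : d ≤ m) :
    1 + (d:ℝ) * (4 * 3 ^ (((m - d : ℕ):ℝ)/3) - 1) ≤ 4 * 3 ^ ((m:ℝ)/3) - 1 := by
  have hcast : ((m - d : ℕ) : ℝ) = (m:ℝ) - (d:ℝ) := by
    have : (d:ℝ) ≤ (m:ℝ) := by exact_mod_cast hdm
    push_cast [Nat.cast_sub hdm]; ring
  rw [hcast]
  set x := (3:ℝ) ^ (((m:ℝ) - d)/3) with hx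
  have hxpos : 0 < x := Real.rpow_pos_of_pos (by norm_num) _
  have hsplit : (3:ℝ) ^ ((m:ℝ)/3) = x * (3:ℝ) ^ ((d:ℝ)/3) := by
    rw [hx, ← rpow_third_add]
    norm_num
  rcases eq_or_lt_of_le hd1 with h1 | h2
  · -- d = 1
    have hd : d = 1 := h1.symm
    subst hd
    rw [hsplit]
    have hx1 : (1:ℝ) ≤ x := one_le_rpow_third (by
      have : (1:ℝ) ≤ (m:ℝ) := by exact_mod_cast hdm
      push_cast; linarith)
    have h54 : (5/4:ℝ) ≤ (3:ℝ) ^ (((1:ℕ):ℝ)/3) := by exact_mod_cast third_root_ge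
    nlinarith
  · -- d ≥ 2
    have hd2 : (2:ℝ) ≤ (d:ℝ) := by exact_mod_cast h2
    have hdle : (d:ℝ) ≤ (3:ℝ) ^ ((d:ℝ)/3) := nat_le_rpow_third d
    rw [hsplit]
    nlinarith

/-- bounding the cardinality of a finite union -/
lemma ncard_biUnion_le {α β : Type*} [Finite β] (s : Finset α) (f : α → Set β) :
    (⋃ x ∈ s, f x).ncard ≤ ∑ x ∈ s, (f x).ncard := by
  classical
  induction s using Finset.induction_on with
  | empty => simp
  | insert _ _ hni ih =>
      rename_i a s
      rw [Finset.sum_insert hni]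
      have : (⋃ x ∈ insert a s, f x) = f a ∪ ⋃ x ∈ s, f x := by
        simp [Set.biUnion_insert]
      rw [this]
      calc (f a ∪ ⋃ x ∈ s, f x).ncard ≤ (f a).ncard + (⋃ x ∈ s, f x).ncard :=
            Set.ncard_union_le _ _
      _ ≤ _ := by omega

section Counting

variable [Fintype V] [DecidableEq V]

/-- induced paths from `a` to `b` whose non-`a` vertices lie in `A` -/
def PS (G : SimpleGraph V) (A : Set V) (a b : V) : Set (Set V) :=
  {t | Pathish G t a b ∧ t \ {a} ⊆ A}

lemma PS_cover (G : SimpleGraph V) (A : Set V) (a b : V) :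
    PS G A a b ⊆ {{a, b}} ∪
      ⋃ u ∈ (A ∩ G.neighborSet a), (insert a) '' PS G (A \ ({a} ∪ G.neighborSet a)) u b := by
  rintro t ⟨hpath, hsub⟩
  by_cases hne : t = {a, b}
  · left; exact hne
  · right
    obtain ⟨u, hut, hua, hub, hadj, huniq, hpeel⟩ := pathish_peel hpath hne
    have huA : u ∈ A := hsub ⟨hut, by simp [hua]⟩
    refine Set.mem_biUnion (show u ∈ A ∩ G.neighborSet a from ⟨huA, hadj⟩) ?_
    refine ⟨t \ {a}, ⟨hpeel, ?_⟩, ?_⟩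
    · rintro x ⟨⟨hxt, hxa⟩, hxu⟩
      simp only [Set.mem_singleton_iff] at hxa hxu
      refine ⟨hsub ⟨hxt, by simp [hxa]⟩, ?_⟩
      simp only [Set.mem_union, Set.mem_singleton_iff, SimpleGraph.mem_neighborSet]
      rintro (rfl | hadj')
      · exact hxa rfl
      · exact hxu (huniq x hxt hadj')
    · have := hpath.2.1
      exact Set.insert_diff_singleton.trans (Set.insert_eq_self.2 this)

lemma PS_bound (G : SimpleGraph V) : ∀ (N : ℕ) (A : Set V) (a b : V), A.ncard ≤ N →
    ((PS G A a b).ncard : ℝ) ≤ 4 * 3 ^ ((A.ncard : ℝ)/3) - 1 := by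
  intro N
  induction N with
  | zero =>
      intro A a b hA
      have hA0 : A.ncard = 0 := Nat.le_zero.1 hA
      have hAe : A = ∅ := (Set.ncard_eq_zero (Set.toFinite _)).1 hA0
      subst hAe
      have : PS G ∅ a b ⊆ {{a, b}} := by
        have := PS_cover G ∅ a b
        simpa using this
      have h1 : (PS G ∅ a b).ncard ≤ 1 := by
        calc (PS G ∅ a b).ncard ≤ ({{a, b}} : Set (Set V)).ncard := Set.ncard_le_ncard this
        _ = 1 := Set.ncard_singleton _
      have h2 : ((PS G ∅ a b).ncard : ℝ) ≤ 1 := by exact_mod_cast h1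
      have h3 : (1:ℝ) ≤ 4 * 3 ^ (((0:ℕ):ℝ)/3) - 1 := by norm_num
      rw [hA0]
      linarith
  | succ N ih =>
      intro A a b hA
      set P : Set V := A ∩ G.neighborSet a with hP
      set d : ℕ := P.ncard with hd
      set A' : Set V := A \ ({a} ∪ G.neighborSet a) with hA'
      have hPfin : P.Finite := Set.toFinite _
      have hPA : P ⊆ A := Set.inter_subset_left
      have hdA : d ≤ A.ncard := Set.ncard_le_ncard hPA
      have hA'card : A'.ncard ≤ A.ncard - d := by
        have h1 : A' ⊆ A \ P := by
          rw [hA', hP]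
          intro x hx
          exact ⟨hx.1, fun hxP => hx.2 (Or.inr hxP.2)⟩
        calc A'.ncard ≤ (A \ P).ncard := Set.ncard_le_ncard h1
        _ = A.ncard - d := Set.ncard_diff hPA
      by_cases hd0 : d = 0
      · -- no neighbors: at most the single path {a, b}
        have hPe : P = ∅ := (Set.ncard_eq_zero (Set.toFinite _)).1 hd0
        have hcov := PS_cover G A a b
        rw [← hP, hPe] at hcov
        simp only [Set.mem_empty_iff_false, Set.iUnion_of_empty, Set.iUnion_empty,
          Set.union_empty] at hcov
        have h1 : (PS G A a b).ncard ≤ 1 := by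
          calc (PS G A a b).ncard ≤ ({{a, b}} : Set (Set V)).ncard :=
                Set.ncard_le_ncard hcov
          _ = 1 := Set.ncard_singleton _
        have h2 : ((PS G A a b).ncard : ℝ) ≤ 1 := by exact_mod_cast h1
        have h3 : (1:ℝ) ≤ 4 * 3 ^ ((A.ncard:ℝ)/3) - 1 := by
          have := one_le_rpow_third (show (0:ℝ) ≤ (A.ncard:ℝ) by positivity)
          linarith
        linarith
      · -- main case
        have hd1 : 1 ≤ d := Nat.one_le_iff_ne_zero.2 hd0
        set Pf : Finset V := hPfin.toFinset with hPf
        have hPfcard : Pf.card = d := by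
          rw [hPf, hd, Set.ncard_eq_toFinset_card P hPfin]
        -- nat inequality
        have hnat : (PS G A a b).ncard ≤ 1 + ∑ u ∈ Pf, (PS G A' u b).ncard := by
          have hcov := PS_cover G A a b
          rw [← hP, ← hA'] at hcov
          have hre : (⋃ u ∈ P, (insert a) '' PS G A' u b) =
              ⋃ u ∈ Pf, (insert a) '' PS G A' u b := by
            have hPeq : ∀ u, u ∈ P ↔ u ∈ Pf := fun u => (hPfin.mem_toFinset).symm
            ext t
            simp only [Set.mem_iUnion, exists_prop]
            constructor
            · rintro ⟨u, hu, ht⟩; exact ⟨u, (hPeq u).1 hu, ht⟩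
            · rintro ⟨u, hu, ht⟩; exact ⟨u, (hPeq u).2 hu, ht⟩
          rw [hre] at hcov
          calc (PS G A a b).ncard
              ≤ (({{a, b}} : Set (Set V)) ∪ ⋃ u ∈ Pf, (insert a) '' PS G A' u b).ncard :=
                Set.ncard_le_ncard hcov
          _ ≤ ({{a, b}} : Set (Set V)).ncard + (⋃ u ∈ Pf, (insert a) '' PS G A' u b).ncard :=
                Set.ncard_union_le _ _
          _ ≤ 1 + ∑ u ∈ Pf, ((insert a) '' PS G A' u b).ncard := by
                rw [Set.ncard_singleton]
                exact Nat.add_le_add_left (ncard_biUnion_le _ _) 1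
          _ ≤ 1 + ∑ u ∈ Pf, (PS G A' u b).ncard := by
                refine Nat.add_le_add_left (Finset.sum_le_sum fun u _ => ?_) 1
                exact Set.ncard_image_le (Set.toFinite _)
        -- real bound
        have hih : ∀ u : V, ((PS G A' u b).ncard : ℝ) ≤ 4 * 3 ^ (((A.ncard - d : ℕ):ℝ)/3) - 1 := by
          intro u
          have hA'N : A'.ncard ≤ N := by omega
          calc ((PS G A' u b).ncard : ℝ) ≤ 4 * 3 ^ ((A'.ncard:ℝ)/3) - 1 := ih A' u b hA'N
          _ ≤ 4 * 3 ^ (((A.ncard - d : ℕ):ℝ)/3) - 1 := by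
                have : (A'.ncard : ℝ) ≤ ((A.ncard - d : ℕ):ℝ) := by exact_mod_cast hA'card
                have := rpow_third_mono this
                linarith
        have hreal : ((PS G A a b).ncard : ℝ) ≤
            1 + (d:ℝ) * (4 * 3 ^ (((A.ncard - d : ℕ):ℝ)/3) - 1) := by
          calc ((PS G A a b).ncard : ℝ) ≤ (1 + ∑ u ∈ Pf, (PS G A' u b).ncard : ℕ) := by
                exact_mod_cast hnat
          _ = 1 + ∑ u ∈ Pf, ((PS G A' u b).ncard : ℝ) := by push_cast; ring
          _ ≤ 1 + ∑ _u ∈ Pf, (4 * 3 ^ (((A.ncard - d : ℕ):ℝ)/3) - 1) := by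
                refine add_le_add_right (Finset.sum_le_sum fun u _ => hih u) 1
          _ = 1 + (d:ℝ) * (4 * 3 ^ (((A.ncard - d : ℕ):ℝ)/3) - 1) := by
                rw [Finset.sum_const, hPfcard, nsmul_eq_mul]
        calc ((PS G A a b).ncard : ℝ)
            ≤ 1 + (d:ℝ) * (4 * 3 ^ (((A.ncard - d : ℕ):ℝ)/3) - 1) := hreal
        _ ≤ 4 * 3 ^ ((A.ncard:ℝ)/3) - 1 := arith_main hd1 hdA

lemma third_root_le : (3:ℝ) ^ ((1:ℝ)/3) ≤ 8/5 := by
  apply cube_le_cube (by norm_num)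
  have : ((3:ℝ) ^ ((1:ℝ)/3))^3 = 3 := by
    have := rpow_third_cube 1
    simpa using this
  rw [this]; norm_num

lemma arith_cycle {m d : ℕ} (hm : 1 ≤ m) (hdm : d ≤ m) :
    128 * (3 ^ (((m-1:ℕ):ℝ)/3) - 1) + (d:ℝ)^2 * (4 * 3 ^ (((m-d:ℕ):ℝ)/3)) ≤
      128 * ((3:ℝ) ^ ((m:ℝ)/3) - 1) := by
  have hc1 : ((m - 1 : ℕ) : ℝ) = (m:ℝ) - 1 := by push_cast [Nat.cast_sub hm]; ring
  have hcd : ((m - d : ℕ) : ℝ) = (m:ℝ) - (d:ℝ) := by push_cast [Nat.cast_sub hdm]; ring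
  rw [hc1, hcd]
  set y := (3:ℝ) ^ (((m:ℝ)-1)/3) with hy
  have hypos : 0 < y := Real.rpow_pos_of_pos (by norm_num) _
  have hsplit : (3:ℝ) ^ ((m:ℝ)/3) = y * (3:ℝ) ^ ((1:ℝ)/3) := by
    rw [hy, ← rpow_third_add]; norm_num
  have hd2 : (d:ℝ)^2 ≤ 5 * (3:ℝ) ^ ((d:ℝ)/3) := nat_sq_le_rpow_third d
  have hsplit2 : (3:ℝ) ^ ((d:ℝ)/3) * (3:ℝ) ^ (((m:ℝ)-d)/3) = (3:ℝ) ^ ((m:ℝ)/3) := by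
    rw [← rpow_third_add]; ring_nf
  have hxpos : (0:ℝ) < (3:ℝ) ^ (((m:ℝ)-(d:ℝ))/3) := Real.rpow_pos_of_pos (by norm_num) _
  have h1 : (d:ℝ)^2 * (4 * 3 ^ (((m:ℝ)-d)/3)) ≤ 20 * (3:ℝ) ^ ((m:ℝ)/3) := by
    calc (d:ℝ)^2 * (4 * 3 ^ (((m:ℝ)-d)/3))
        ≤ (5 * (3:ℝ) ^ ((d:ℝ)/3)) * (4 * 3 ^ (((m:ℝ)-d)/3)) := by nlinarith
    _ = 20 * ((3:ℝ) ^ ((d:ℝ)/3) * (3:ℝ) ^ (((m:ℝ)-d)/3)) := by ring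
    _ = 20 * (3:ℝ) ^ ((m:ℝ)/3) := by rw [hsplit2]
  have h54 := third_root_ge
  have h85 := third_root_le
  rw [hsplit]
  rw [hsplit] at h1
  nlinarith

/-- induced cycles inside `A` -/
def CY (G : SimpleGraph V) (A : Set V) : Set (Set V) :=
  {s | IsInducedCycle G s ∧ s ⊆ A}

lemma CY_cover (G : SimpleGraph V) (A : Set V) (v : V) (hv : v ∈ A) :
    CY G A ⊆ CY G (A \ {v}) ∪
      ⋃ u ∈ (A ∩ G.neighborSet v), ⋃ u' ∈ (A ∩ G.neighborSet v),
        (insert v) '' PS G ((A \ ({v} ∪ G.neighborSet v)) ∪ {u'}) u u' := by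
  rintro s ⟨hcyc, hsub⟩
  by_cases hvs : v ∈ s
  · right
    obtain ⟨hfin, hcard, hconn, hdeg⟩ := hcyc
    obtain ⟨u, u', huu', hset, hpathish⟩ := cycle_peel hfin hconn hdeg hvs
    have humem : u ∈ s ∧ G.Adj v u := by
      have : u ∈ {w | w ∈ s ∧ G.Adj v w} := by rw [hset]; simp
      exact this
    have hu'mem : u' ∈ s ∧ G.Adj v u' := by
      have : u' ∈ {w | w ∈ s ∧ G.Adj v w} := by rw [hset]; simp
      exact this
    refine Set.mem_biUnion (show u ∈ A ∩ G.neighborSet v from ⟨hsub humem.1, humem.2⟩) ?_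
    refine Set.mem_biUnion (show u' ∈ A ∩ G.neighborSet v from ⟨hsub hu'mem.1, hu'mem.2⟩) ?_
    refine ⟨s \ {v}, ⟨hpathish, ?_⟩, ?_⟩
    · rintro x ⟨⟨hxs, hxv⟩, hxu⟩
      simp only [Set.mem_singleton_iff] at hxv hxu
      by_cases hxu' : x = u'
      · right; simp [hxu']
      · left
        refine ⟨hsub hxs, ?_⟩
        simp only [Set.mem_union, Set.mem_singleton_iff, SimpleGraph.mem_neighborSet]
        rintro (rfl | hadj)
        · exact hxv rfl
        · have : x ∈ {w | w ∈ s ∧ G.Adj v w} := ⟨hxs, hadj⟩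
          rw [hset] at this
          rcases this with rfl | rfl
          · exact hxu rfl
          · exact hxu' rfl
    · exact Set.insert_diff_singleton.trans (Set.insert_eq_self.2 hvs)
  · left
    exact ⟨hcyc, fun x hx => ⟨hsub hx, by simp; rintro rfl; exact hvs hx⟩⟩

lemma CY_bound (G : SimpleGraph V) : ∀ (N : ℕ) (A : Set V), A.ncard ≤ N →
    ((CY G A).ncard : ℝ) ≤ 128 * ((3:ℝ) ^ ((A.ncard:ℝ)/3) - 1) := by
  intro N
  induction N with
  | zero =>
      intro A hA
      have hA0 : A.ncard = 0 := Nat.le_zero.1 hA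
      have hAe : A = ∅ := (Set.ncard_eq_zero (Set.toFinite _)).1 hA0
      have : CY G A = ∅ := by
        subst hAe
        ext s
        simp only [CY, Set.mem_setOf_eq, Set.mem_empty_iff_false, iff_false, not_and]
        intro hcyc hsub
        have hse : s = ∅ := Set.subset_empty_iff.1 hsub
        rw [hse] at hcyc
        simpa using hcyc.2.1
      rw [this, hA0]
      simp
  | succ N ih =>
      intro A hA
      rcases Nat.eq_zero_or_pos A.ncard with hA0 | hApos
      · have hAe : A = ∅ := (Set.ncard_eq_zero (Set.toFinite _)).1 hA0
        have : CY G A = ∅ := by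
          subst hAe
          ext s
          simp only [CY, Set.mem_setOf_eq, Set.mem_empty_iff_false, iff_false, not_and]
          intro hcyc hsub
          have hse : s = ∅ := Set.subset_empty_iff.1 hsub
          rw [hse] at hcyc
          simpa using hcyc.2.1
        rw [this, hA0]
        simp
      · obtain ⟨v, hv⟩ := Set.nonempty_of_ncard_ne_zero (Nat.pos_iff_ne_zero.1 hApos)
        set m : ℕ := A.ncard with hm
        set P : Set V := A ∩ G.neighborSet v with hP
        set d : ℕ := P.ncard with hdd
        have hPfin : P.Finite := Set.toFinite _
        set Pf : Finset V := hPfin.toFinset with hPf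
        have hPfcard : Pf.card = d := by
          rw [hPf, hdd, Set.ncard_eq_toFinset_card P hPfin]
        have hPA : P ⊆ A := Set.inter_subset_left
        have hdA : d ≤ m := Set.ncard_le_ncard hPA
        set A'' : Set V := A \ ({v} ∪ G.neighborSet v) with hA''
        have hvP : v ∉ P := fun h => G.irrefl h.2
        have hA''card : A''.ncard + d + 1 ≤ m := by
          have h1 : insert v P ⊆ A ∩ ({v} ∪ G.neighborSet v) := by
            rintro x (rfl | hxP)
            · exact ⟨hv, Or.inl rfl⟩
            · exact ⟨hxP.1, Or.inr hxP.2⟩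
          have h2 : (insert v P).ncard = d + 1 := by
            rw [Set.ncard_insert_of_notMem hvP (Set.toFinite _)]
          have h3 : d + 1 ≤ (A ∩ ({v} ∪ G.neighborSet v)).ncard := by
            rw [← h2]; exact Set.ncard_le_ncard h1
          have h4 : A''.ncard = m - (A ∩ ({v} ∪ G.neighborSet v)).ncard := by
            rw [hA'']
            have : A \ ({v} ∪ G.neighborSet v) = A \ (A ∩ ({v} ∪ G.neighborSet v)) := by
              ext x
              simp only [Set.mem_diff, Set.mem_inter_iff]
              tauto
            rw [this, Set.ncard_diff Set.inter_subset_left]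
          have h5 : (A ∩ ({v} ∪ G.neighborSet v)).ncard ≤ m :=
            Set.ncard_le_ncard Set.inter_subset_left
          omega
        -- nat inequality
        have hAv : (A \ {v}).ncard = m - 1 := by
          rw [Set.ncard_diff_singleton_of_mem hv]
        have hnat : (CY G A).ncard ≤ (CY G (A \ {v})).ncard +
            ∑ u ∈ Pf, ∑ u' ∈ Pf, (PS G (A'' ∪ {u'}) u u').ncard := by
          have hcov := CY_cover G A v hv
          rw [← hP, ← hA''] at hcov
          have hre : (⋃ u ∈ P, ⋃ u' ∈ P, (insert v) '' PS G (A'' ∪ {u'}) u u') =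
              ⋃ u ∈ Pf, ⋃ u' ∈ Pf, (insert v) '' PS G (A'' ∪ {u'}) u u' := by
            ext t
            simp only [Set.mem_iUnion, exists_prop]
            constructor
            · rintro ⟨x, hx, x', hx', ht⟩
              exact ⟨x, hPfin.mem_toFinset.2 hx, x', hPfin.mem_toFinset.2 hx', ht⟩
            · rintro ⟨x, hx, x', hx', ht⟩
              exact ⟨x, hPfin.mem_toFinset.1 hx, x', hPfin.mem_toFinset.1 hx', ht⟩
          rw [hre] at hcov
          calc (CY G A).ncard
              ≤ (CY G (A \ {v}) ∪
                  ⋃ u ∈ Pf, ⋃ u' ∈ Pf, (insert v) '' PS G (A'' ∪ {u'}) u u').ncard :=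
                Set.ncard_le_ncard hcov
          _ ≤ (CY G (A \ {v})).ncard +
                (⋃ u ∈ Pf, ⋃ u' ∈ Pf, (insert v) '' PS G (A'' ∪ {u'}) u u').ncard :=
                Set.ncard_union_le _ _
          _ ≤ (CY G (A \ {v})).ncard +
                ∑ u ∈ Pf, (⋃ u' ∈ Pf, (insert v) '' PS G (A'' ∪ {u'}) u u').ncard := by
                exact Nat.add_le_add_left (ncard_biUnion_le _ _) _
          _ ≤ (CY G (A \ {v})).ncard +
                ∑ u ∈ Pf, ∑ u' ∈ Pf, ((insert v) '' PS G (A'' ∪ {u'}) u u').ncard := by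
                refine Nat.add_le_add_left (Finset.sum_le_sum fun u _ => ?_) _
                exact ncard_biUnion_le _ _
          _ ≤ (CY G (A \ {v})).ncard +
                ∑ u ∈ Pf, ∑ u' ∈ Pf, (PS G (A'' ∪ {u'}) u u').ncard := by
                refine Nat.add_le_add_left (Finset.sum_le_sum fun u _ => ?_) _
                exact Finset.sum_le_sum fun u' _ => Set.ncard_image_le (Set.toFinite _)
        -- real bound on each path count
        have hps : ∀ u u' : V, u' ∈ Pf → ((PS G (A'' ∪ {u'}) u u').ncard : ℝ) ≤
            4 * 3 ^ (((m - d : ℕ):ℝ)/3) := by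
          intro u u' _
          have hcard : (A'' ∪ {u'}).ncard ≤ m - d := by
            calc (A'' ∪ {u'}).ncard ≤ A''.ncard + ({u'} : Set V).ncard :=
                  Set.ncard_union_le _ _
            _ = A''.ncard + 1 := by rw [Set.ncard_singleton]
            _ ≤ m - d := by omega
          calc ((PS G (A'' ∪ {u'}) u u').ncard : ℝ)
              ≤ 4 * 3 ^ (((A'' ∪ {u'}).ncard:ℝ)/3) - 1 :=
                PS_bound G ((A'' ∪ {u'}).ncard) _ u u' le_rfl
          _ ≤ 4 * 3 ^ (((m - d : ℕ):ℝ)/3) - 1 := by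
                have : ((A'' ∪ {u'}).ncard : ℝ) ≤ ((m - d : ℕ):ℝ) := by exact_mod_cast hcard
                have := rpow_third_mono this
                linarith
          _ ≤ 4 * 3 ^ (((m - d : ℕ):ℝ)/3) := by linarith
        have hihv : ((CY G (A \ {v})).ncard : ℝ) ≤ 128 * ((3:ℝ) ^ (((m-1:ℕ):ℝ)/3) - 1) := by
          have : (A \ {v}).ncard ≤ N := by omega
          have h := ih (A \ {v}) this
          rw [hAv] at h
          exact h
        have hfinal : ((CY G A).ncard : ℝ) ≤ 128 * ((3:ℝ) ^ (((m-1:ℕ):ℝ)/3) - 1) +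
            (d:ℝ)^2 * (4 * 3 ^ (((m - d : ℕ):ℝ)/3)) := by
          calc ((CY G A).ncard : ℝ)
              ≤ ((CY G (A \ {v})).ncard +
                  ∑ u ∈ Pf, ∑ u' ∈ Pf, (PS G (A'' ∪ {u'}) u u').ncard : ℕ) := by
                exact_mod_cast hnat
          _ = ((CY G (A \ {v})).ncard : ℝ) +
                ∑ u ∈ Pf, ∑ u' ∈ Pf, ((PS G (A'' ∪ {u'}) u u').ncard : ℝ) := by
                push_cast; ring
          _ ≤ 128 * ((3:ℝ) ^ (((m-1:ℕ):ℝ)/3) - 1) +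
                ∑ _u ∈ Pf, ∑ u' ∈ Pf, (4 * (3:ℝ) ^ (((m - d : ℕ):ℝ)/3)) := by
                refine add_le_add hihv ?_
                refine Finset.sum_le_sum fun u _ => Finset.sum_le_sum fun u' hu' => hps u u' hu'
          _ = 128 * ((3:ℝ) ^ (((m-1:ℕ):ℝ)/3) - 1) +
                (d:ℝ)^2 * (4 * 3 ^ (((m - d : ℕ):ℝ)/3)) := by
                rw [Finset.sum_const, Finset.sum_const, hPfcard, nsmul_eq_mul, nsmul_eq_mul]
                push_cast
                ring
        calc ((CY G A).ncard : ℝ)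
            ≤ 128 * ((3:ℝ) ^ (((m-1:ℕ):ℝ)/3) - 1) +
              (d:ℝ)^2 * (4 * 3 ^ (((m - d : ℕ):ℝ)/3)) := hfinal
        _ ≤ 128 * ((3:ℝ) ^ ((m:ℝ)/3) - 1) := arith_cycle hApos hdA


/-- the number of induced cycles of any graph on a finite vertex type -/
lemma numInducedCycles_le (G : SimpleGraph V) :
    (numInducedCycles G : ℝ) ≤ 128 * (3:ℝ) ^ ((Fintype.card V : ℝ)/3) := by
  have heq : {s : Set V | IsInducedCycle G s} = CY G Set.univ := by
    ext s
    simp [CY, Set.subset_univ]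
  have hcard : (Set.univ : Set V).ncard = Fintype.card V := by
    rw [Set.ncard_univ, Nat.card_eq_fintype_card]
  have h := CY_bound G ((Set.univ : Set V).ncard) Set.univ le_rfl
  rw [hcard] at h
  have hpos : (0:ℝ) < 3 ^ ((Fintype.card V : ℝ)/3) := Real.rpow_pos_of_pos (by norm_num) _
  calc (numInducedCycles G : ℝ) = ((CY G Set.univ).ncard : ℝ) := by
        rw [numInducedCycles, heq]
  _ ≤ 128 * ((3:ℝ) ^ ((Fintype.card V : ℝ)/3) - 1) := h
  _ ≤ 128 * (3:ℝ) ^ ((Fintype.card V : ℝ)/3) := by linarith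

end Counting

section LowerBound

/-! ### the lower-bound construction: blow-up of a cycle -/

variable {n k : ℕ}

/-- blow-up of a `k`-cycle inside `Fin n`: vertices `< 3k`, labelled by residue mod `k` -/
def cycG (n k : ℕ) : SimpleGraph (Fin n) :=
  SimpleGraph.fromRel (fun x y =>
    x.val < 3*k ∧ y.val < 3*k ∧ (x.val % k + 1) % k = y.val % k)

lemma mod_succ_ne (hk : 3 ≤ k) {e : ℕ} (he : e < k) : (e+1) % k ≠ e := by
  rcases Nat.lt_or_ge (e+1) k with h | h
  · rw [Nat.mod_eq_of_lt h]; omega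
  · have h1 : e + 1 = k := by omega
    rw [h1, Nat.mod_self]; omega

lemma mod_pred_succ (hk : 3 ≤ k) {e : ℕ} (he : e < k) : ((e + (k-1)) % k + 1) % k = e := by
  rw [Nat.mod_add_mod]
  have h1 : e + (k-1) + 1 = e + k := by omega
  rw [h1, Nat.add_mod_right, Nat.mod_eq_of_lt he]

lemma mod_succ_inv (hk : 3 ≤ k) {e j : ℕ} (he : e < k) (hj : j < k)
    (h : (e+1) % k = j) : e = (j + (k-1)) % k := by
  have h2 : ((e+1) % k + (k-1)) % k = e := by
    rw [Nat.mod_add_mod]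
    have h1 : e + 1 + (k-1) = e + k := by omega
    rw [h1, Nat.add_mod_right, Nat.mod_eq_of_lt he]
  rw [h] at h2
  exact h2.symm

lemma mod_succ_ne_pred (hk : 3 ≤ k) {j : ℕ} (hj : j < k) :
    (j+1) % k ≠ (j + (k-1)) % k := by
  intro h
  have h2 := mod_pred_succ hk hj
  rw [← h, Nat.mod_add_mod] at h2
  -- (j+2) % k = j
  have h3 : (j + 2) % k = j := by
    have : j + 1 + 1 = j + 2 := by omega
    rwa [this] at h2
  rcases Nat.lt_or_ge (j+2) k with h4 | h4
  · rw [Nat.mod_eq_of_lt h4] at h3; omega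
  · rw [Nat.mod_eq_sub_mod h4, Nat.mod_eq_of_lt (by omega)] at h3
    omega

/-- the chosen representative of part `j` -/
def vtx (c : Fin k → Fin 3) (j : Fin k) (hkn : 3 * k ≤ n) : Fin n :=
  ⟨(c j).val * k + j.val, by
    have h1 := (c j).2
    have h2 := j.2
    calc (c j).val * k + j.val < (c j).val * k + k := by omega
    _ = ((c j).val + 1) * k := by ring
    _ ≤ 3 * k := by
        have : (c j).val + 1 ≤ 3 := by omega
        exact Nat.mul_le_mul_right k this
    _ ≤ n := hkn⟩

lemma vtx_val_lt (hkn : 3 * k ≤ n) (c : Fin k → Fin 3) (j : Fin k) : (vtx c j hkn).val < 3 * k := by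
  have h1 := (c j).2
  have h2 := j.2
  show (c j).val * k + j.val < 3 * k
  nlinarith

lemma vtx_mod (hkn : 3 * k ≤ n) (c : Fin k → Fin 3) (j : Fin k) : (vtx c j hkn).val % k = j.val := by
  show ((c j).val * k + j.val) % k = j.val
  rw [Nat.add_comm, Nat.add_mul_mod_self_right, Nat.mod_eq_of_lt j.2]

lemma vtx_inj (hkn : 3 * k ≤ n) (c : Fin k → Fin 3) {j j' : Fin k} (h : vtx c j hkn = vtx c j' hkn) : j = j' := by
  have h1 : (vtx c j hkn).val % k = (vtx c j' hkn).val % k := by rw [h]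
  rw [vtx_mod hkn, vtx_mod hkn] at h1
  exact Fin.ext h1

/-- adjacency between chosen vertices follows the cycle -/
lemma vtx_adj_iff (hk3 : 3 ≤ k) (hkn : 3 * k ≤ n) (c : Fin k → Fin 3) (j j' : Fin k) :
    (cycG n k).Adj (vtx c j hkn) (vtx c j' hkn) ↔
      ((j.val + 1) % k = j'.val ∨ (j'.val + 1) % k = j.val) := by
  rw [cycG, SimpleGraph.fromRel_adj]
  constructor
  · rintro ⟨hne, h | h⟩
    · left; rw [← vtx_mod hkn c j, ← vtx_mod hkn c j']; exact h.2.2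
    · right; rw [← vtx_mod hkn c j, ← vtx_mod hkn c j']; exact h.2.2
  · intro h
    have hne : vtx c j hkn ≠ vtx c j' hkn := by
      intro heq
      have hjj' : j = j' := vtx_inj hkn c heq
      subst hjj'
      rcases h with h | h <;> exact mod_succ_ne hk3 j.2 h
    refine ⟨hne, ?_⟩
    rcases h with h | h
    · left
      exact ⟨vtx_val_lt hkn c j, vtx_val_lt hkn c j',
        by rw [vtx_mod hkn, vtx_mod hkn]; exact h⟩
    · right
      exact ⟨vtx_val_lt hkn c j', vtx_val_lt hkn c j,
        by rw [vtx_mod hkn, vtx_mod hkn]; exact h⟩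

/-- the induced cycle corresponding to a choice function -/
def cycSet (c : Fin k → Fin 3) (hkn : 3 * k ≤ n) : Set (Fin n) :=
  Set.range (fun j => vtx c j hkn)

lemma cycSet_isInducedCycle (hk3 : 3 ≤ k) (hkn : 3 * k ≤ n) (c : Fin k → Fin 3) :
    IsInducedCycle (cycG n k) (cycSet c hkn) := by
  have hkpos : 0 < k := by omega
  refine ⟨Set.toFinite _, ?_, ?_, ?_⟩
  · -- ncard ≥ 3
    have h1 : (cycSet c hkn).ncard = k := by
      rw [cycSet, ← Set.image_univ,
        Set.ncard_image_of_injective _ (fun a b hab => vtx_inj hkn c hab),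
        Set.ncard_univ, Nat.card_eq_fintype_card, Fintype.card_fin]
    omega
  · -- connectivity
    rw [induce_connected_iff]
    have hreach0 : ∀ e (he : e < k),
        ReachIn (cycG n k) (cycSet c hkn) (vtx c ⟨0, hkpos⟩ hkn) (vtx c ⟨e, he⟩ hkn) := by
      intro e
      induction e with
      | zero => intro he; exact ReachIn.refl ⟨⟨0, hkpos⟩, rfl⟩
      | succ f ihf =>
          intro he
          have hf : f < k := by omega
          refine (ihf hf).step ?_ ⟨⟨f+1, he⟩, rfl⟩
          rw [vtx_adj_iff hk3 hkn]
          left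
          simp [Nat.mod_eq_of_lt he]
      
    constructor
    · exact ⟨vtx c ⟨0, hkpos⟩ hkn, ⟨0, hkpos⟩, rfl⟩
    · rintro x ⟨j1, rfl⟩ y ⟨j2, rfl⟩
      have h1 := hreach0 j1.val j1.2
      have h2 := hreach0 j2.val j2.2
      simp only [Fin.eta] at h1 h2
      exact h1.symm.trans h2
  · -- degrees
    rintro x ⟨j, rfl⟩
    set js : Fin k := ⟨(j.val + 1) % k, Nat.mod_lt _ hkpos⟩ with hjs
    set jp : Fin k := ⟨(j.val + (k-1)) % k, Nat.mod_lt _ hkpos⟩ with hjp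
    have hset : {w | w ∈ cycSet c hkn ∧ (cycG n k).Adj (vtx c j hkn) w} =
        {vtx c js hkn, vtx c jp hkn} := by
      ext w
      simp only [Set.mem_setOf_eq, Set.mem_insert_iff, Set.mem_singleton_iff]
      constructor
      · rintro ⟨⟨j2, rfl⟩, hadj⟩
        rw [vtx_adj_iff hk3 hkn] at hadj
        rcases hadj with h | h
        · left; congr 1; exact Fin.ext h.symm
        · right; congr 1
          exact Fin.ext (mod_succ_inv hk3 j2.2 j.2 h)
      · rintro (rfl | rfl)
        · refine ⟨⟨js, rfl⟩, ?_⟩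
          rw [vtx_adj_iff hk3 hkn]
          left; rfl
        · refine ⟨⟨jp, rfl⟩, ?_⟩
          rw [vtx_adj_iff hk3 hkn]
          right
          exact mod_pred_succ hk3 j.2
    rw [hset]
    rw [Set.ncard_pair]
    intro heq
    have := vtx_inj hkn c heq
    rw [hjs] at this
    have hvv : (j.val + 1) % k = (j.val + (k-1)) % k := by
      have := congrArg Fin.val this
      exact this
    exact mod_succ_ne_pred hk3 j.2 hvv

lemma cycSet_inj (hk3 : 3 ≤ k) (hkn : 3 * k ≤ n) {c c' : Fin k → Fin 3}
    (h : cycSet c hkn = cycSet c' hkn) : c = c' := by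
  funext j
  have h1 : vtx c j hkn ∈ cycSet c' hkn := by
    rw [← h]; exact ⟨j, rfl⟩
  obtain ⟨j', hj'⟩ := h1
  have hmod : j'.val = j.val := by
    have := congrArg (fun x : Fin n => x.val % k) hj'
    simpa [vtx_mod hkn] using this
  have hval : (c' j').val * k + j'.val = (c j).val * k + j.val := congrArg Fin.val hj'
  have hkpos : 0 < k := by omega
  have : (c' j').val = (c j).val := by
    rw [hmod] at hval
    have := Nat.add_right_cancel hval
    exact Nat.eq_of_mul_eq_mul_right hkpos this
  have hj'j : j' = j := Fin.ext hmod
  subst hj'j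
  exact (Fin.ext this).symm

/-- the lower bound: at least `3^k` induced cycles -/
lemma numInducedCycles_cycG (hk3 : 3 ≤ k) (hkn : 3 * k ≤ n) :
    3 ^ k ≤ numInducedCycles (cycG n k) := by
  have hsub : Set.range (fun c : Fin k → Fin 3 => cycSet c hkn) ⊆
      {s : Set (Fin n) | IsInducedCycle (cycG n k) s} := by
    rintro s ⟨c, rfl⟩
    exact cycSet_isInducedCycle hk3 hkn c
  have h1 : (Set.range (fun c : Fin k → Fin 3 => cycSet c hkn)).ncard = 3 ^ k := by
    rw [← Set.image_univ,
      Set.ncard_image_of_injective _ (fun a b hab => cycSet_inj hk3 hkn hab),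
      Set.ncard_univ, Nat.card_eq_fintype_card, Fintype.card_fun]
    simp
  calc 3 ^ k = (Set.range (fun c : Fin k → Fin 3 => cycSet c hkn)).ncard := h1.symm
  _ ≤ numInducedCycles (cycG n k) := Set.ncard_le_ncard hsub (Set.toFinite _)

end LowerBound

/-! ### assembling the main theorem -/

lemma maxSet_bddAbove (n : ℕ) :
    BddAbove {k : ℕ | ∃ G : SimpleGraph (Fin n), numInducedCycles G = k} := by
  refine ⟨(Set.univ : Set (Set (Fin n))).ncard, ?_⟩
  rintro k ⟨G, rfl⟩
  exact Set.ncard_le_ncard (Set.subset_univ _) (Set.toFinite _)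

lemma maxSet_nonempty (n : ℕ) :
    {k : ℕ | ∃ G : SimpleGraph (Fin n), numInducedCycles G = k}.Nonempty :=
  ⟨numInducedCycles (⊥ : SimpleGraph (Fin n)), ⊥, rfl⟩

lemma maxInducedCycles_upper (n : ℕ) :
    (maxInducedCycles n : ℝ) ≤ 128 * (3:ℝ) ^ ((n:ℝ)/3) := by
  have hmem := Nat.sSup_mem (maxSet_nonempty n) (maxSet_bddAbove n)
  obtain ⟨G, hG⟩ := hmem
  rw [maxInducedCycles, ← hG]
  have := numInducedCycles_le G
  rwa [Fintype.card_fin] at this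

lemma maxInducedCycles_lower {n : ℕ} (hn : 9 ≤ n) :
    (1/3 : ℝ) * (3:ℝ) ^ ((n:ℝ)/3) ≤ (maxInducedCycles n : ℝ) := by
  set k := n / 3 with hk
  have hk3 : 3 ≤ k := by
    rw [hk, Nat.le_div_iff_mul_le (by norm_num)]
    omega
  have hkn : 3 * k ≤ n := by
    rw [hk, Nat.mul_comm]
    exact Nat.div_mul_le_self n 3
  have h1 : 3 ^ k ≤ numInducedCycles (cycG n k) := numInducedCycles_cycG hk3 hkn
  have h2 : numInducedCycles (cycG n k) ≤ maxInducedCycles n :=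
    le_csSup (maxSet_bddAbove n) ⟨cycG n k, rfl⟩
  have h3 : (3:ℝ) ^ (k:ℕ) ≤ (maxInducedCycles n : ℝ) := by
    have : ((3 ^ k : ℕ) : ℝ) ≤ (maxInducedCycles n : ℝ) := by exact_mod_cast le_trans h1 h2
    push_cast at this
    exact this
  have h4 : (3:ℝ) ^ ((n:ℝ)/3 - 1) ≤ (3:ℝ) ^ ((k:ℕ):ℝ) := by
    apply Real.rpow_le_rpow_of_exponent_le (by norm_num)
    have hmod := Nat.div_add_mod n 3
    have hmlt : n % 3 < 3 := Nat.mod_lt _ (by norm_num)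
    have : 3 * (k:ℝ) + ((n % 3 : ℕ):ℝ) = (n:ℝ) := by
      rw [hk]; exact_mod_cast hmod
    have hm3 : ((n % 3 : ℕ):ℝ) ≤ 2 := by exact_mod_cast Nat.le_of_lt_succ hmlt
    linarith
  have h5 : (3:ℝ) ^ ((n:ℝ)/3 - 1) = (1/3) * (3:ℝ) ^ ((n:ℝ)/3) := by
    rw [Real.rpow_sub (by norm_num)]
    norm_num
    ring
  rw [← h5]
  calc (3:ℝ) ^ ((n:ℝ)/3 - 1) ≤ (3:ℝ) ^ ((k:ℕ):ℝ) := h4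
  _ = (3:ℝ) ^ (k:ℕ) := Real.rpow_natCast 3 k
  _ ≤ (maxInducedCycles n : ℝ) := h3

/-- `m(n) = Θ(3^{n/3})`. -/
theorem maxInducedCycles_theta :
    ∃ (c C : ℝ) (n₀ : ℕ), 0 < c ∧ 0 < C ∧
      ∀ n : ℕ, n₀ ≤ n →
        c * (3 : ℝ) ^ ((n : ℝ) / 3) ≤ (maxInducedCycles n : ℝ) ∧
        (maxInducedCycles n : ℝ) ≤ C * (3 : ℝ) ^ ((n : ℝ) / 3) := by
  refine ⟨1/3, 128, 9, by norm_num, by norm_num, fun n hn => ?_⟩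
  exact ⟨maxInducedCycles_lower hn, maxInducedCycles_upper n⟩

end ExtremalInducedCycles
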